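/- Consider the one-step LSTM map Φ taking state s = (c, h) and input x to s_+ = (c_+, h_+) via f = σ(W_f h + U_f x), i = σ(W_i h + U_i x), o = σ(W_o h + U_o x), z = tanh(W_z h + U_z x), c_+ = i ∘ z + f ∘ c, h_+ = o ∘ tanh(c_+). Fix f_∞ < 1 and C ≥ 0, and suppose all states considered satisfy ‖c‖_∞, ‖c'‖_∞ ≤ C and all forget-gate outputs satisfy ‖f‖_∞ ≤ f_∞. Set μ = (‖W_i‖_∞ + C‖W_f‖_∞)/4 + ‖W_z‖_∞. Then for any two states s = (c, h), s' = (c', h') and any common input x: ‖c_+ − c'_+‖_∞ ≤ μ‖h − h'‖_∞ + f_∞‖c − c'‖_∞ and ‖h_+ − h'_+‖_∞ ≤ (μ + ‖W_o‖_∞/4)‖h − h'‖_∞ + f_∞‖c − c'‖_∞. Consequently, if λ := μ + ‖W_o‖_∞/4 + f_∞ < 1, then ‖s_+ − s'_+‖_∞ ≤ λ‖s − s'‖_∞, i.e. the LSTM map is λ-contractive in the ℓ∞ norm on such states. -/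

import Mathlib

attribute [local instance] Matrix.linftyOpNormedAddCommGroup

/-- The logistic sigmoid `σ(z) = 1/(1 + e^{−z})`. -/
noncomputable def sigmoid (z : ℝ) : ℝ := 1 / (1 + Real.exp (-z))

lemma sigmoid_hasDerivAt (x : ℝ) :
    HasDerivAt sigmoid (Real.exp (-x) / (1 + Real.exp (-x))^2) x := by
  have h1 : HasDerivAt (fun z : ℝ => 1 + Real.exp (-z)) (-Real.exp (-x)) x := by
    have h := (Real.hasDerivAt_exp (-x)).comp x (hasDerivAt_neg x)
    exact ((hasDerivAt_const x (1:ℝ)).add h).congr_deriv (by simp)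
  have hne : (1 + Real.exp (-x)) ≠ 0 := by positivity
  have h2 := h1.inv hne
  have : sigmoid = fun z => (1 + Real.exp (-z))⁻¹ := by
    funext z; simp [sigmoid, one_div]
  rw [this]
  exact h2.congr_deriv (by ring)

lemma sigmoid_lipschitz (a b : ℝ) : |sigmoid a - sigmoid b| ≤ |a - b| / 4 := by
  have hL : LipschitzWith (1/4 : NNReal) sigmoid := by
    apply lipschitzWith_of_nnnorm_deriv_le
    · exact fun x => (sigmoid_hasDerivAt x).differentiableAt
    · intro x
      have hd := (sigmoid_hasDerivAt x).deriv
      rw [← NNReal.coe_le_coe, coe_nnnorm, hd]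
      have he := Real.exp_pos (-x)
      rw [Real.norm_eq_abs, abs_of_pos (by positivity)]
      rw [div_le_iff₀ (by positivity)]
      push_cast
      nlinarith [sq_nonneg (1 - Real.exp (-x))]
  have := hL.dist_le_mul a b
  simp [Real.dist_eq] at this
  linarith

lemma sigmoid_pos (z : ℝ) : 0 < sigmoid z := by unfold sigmoid; positivity

lemma sigmoid_lt_one (z : ℝ) : sigmoid z < 1 := by
  unfold sigmoid
  rw [div_lt_one (by positivity)]
  linarith [Real.exp_pos (-z)]

lemma abs_sigmoid_le_one (z : ℝ) : |sigmoid z| ≤ 1 := by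
  rw [abs_of_pos (sigmoid_pos z)]; exact (sigmoid_lt_one z).le

lemma tanh_eq_sigmoid (x : ℝ) : Real.tanh x = 2 * sigmoid (2*x) - 1 := by
  have h2 : Real.exp (-(2*x)) = Real.exp (-x) * Real.exp (-x) := by
    rw [← Real.exp_add]; ring_nf
  rw [Real.tanh_eq_sinh_div_cosh, Real.sinh_eq, Real.cosh_eq, sigmoid, h2]
  have h3 := Real.exp_pos x
  have h4 := Real.exp_pos (-x)
  have h5 : Real.exp x * Real.exp (-x) = 1 := by
    rw [← Real.exp_add]; simp
  field_simp
  nlinarith [h5]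

lemma tanh_lipschitz (a b : ℝ) : |Real.tanh a - Real.tanh b| ≤ |a - b| := by
  have h := sigmoid_lipschitz (2*a) (2*b)
  have e1 : |2*a - 2*b| = 2 * |a - b| := by
    rw [show (2*a - 2*b : ℝ) = 2*(a-b) by ring, abs_mul, abs_two]
  calc |Real.tanh a - Real.tanh b|
      = |2 * (sigmoid (2*a) - sigmoid (2*b))| := by
        rw [tanh_eq_sigmoid, tanh_eq_sigmoid]; ring_nf
    _ = 2 * |sigmoid (2*a) - sigmoid (2*b)| := by rw [abs_mul, abs_two]
    _ ≤ |a - b| := by rw [e1] at h; linarith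

lemma abs_tanh_le_one (z : ℝ) : |Real.tanh z| ≤ 1 := by
  rw [tanh_eq_sigmoid]
  have h1 := sigmoid_pos (2*z)
  have h2 := sigmoid_lt_one (2*z)
  rw [abs_le]; constructor <;> linarith

lemma prod_abs_bound {a b A B : ℝ} (ha : |a| ≤ A) (hb : |b| ≤ B) : |a * b| ≤ A * B := by
  rw [abs_mul]
  exact mul_le_mul ha hb (abs_nonneg _) ((abs_nonneg a).trans ha)

set_option maxHeartbeats 1000000 in
/-- one-step LSTM map contracts in the `ℓ∞` norm. With
`μ = (‖W_i‖_∞ + C‖W_f‖_∞)/4 + ‖W_z‖_∞`, for states with `‖c‖_∞, ‖c'‖_∞ ≤ C` and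
forget gates bounded by `f_∞ < 1`:
`‖c₊ − c'₊‖_∞ ≤ μ‖h − h'‖_∞ + f_∞‖c − c'‖_∞`,
`‖h₊ − h'₊‖_∞ ≤ (μ + ‖W_o‖_∞/4)‖h − h'‖_∞ + f_∞‖c − c'‖_∞`, and if
`λ = μ + ‖W_o‖_∞/4 + f_∞ < 1` then `‖s₊ − s'₊‖_∞ ≤ λ‖s − s'‖_∞` where
`‖s‖_∞ = max (‖c‖_∞) (‖h‖_∞)`. Vectors in `Fin dd → ℝ` carry the sup norm and
matrices the induced `ℓ∞` operator norm (max absolute row sum). -/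
theorem stmt_4 (dd nn : ℕ) (finf C : ℝ) (hfinf : finf < 1) (hC : 0 ≤ C)
    (Wf Wi Wo Wz : Matrix (Fin dd) (Fin dd) ℝ)
    (Uf Ui Uo Uz : Matrix (Fin dd) (Fin nn) ℝ)
    (c h c' h' : Fin dd → ℝ) (x : Fin nn → ℝ)
    (hcC : ‖c‖ ≤ C) (hc'C : ‖c'‖ ≤ C)
    (f i o z cp hp f' i' o' z' cp' hp' : Fin dd → ℝ)
    (hf : f = fun j => sigmoid ((Wf.mulVec h + Uf.mulVec x) j))
    (hi : i = fun j => sigmoid ((Wi.mulVec h + Ui.mulVec x) j))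
    (ho : o = fun j => sigmoid ((Wo.mulVec h + Uo.mulVec x) j))
    (hz : z = fun j => Real.tanh ((Wz.mulVec h + Uz.mulVec x) j))
    (hcp : cp = i * z + f * c)
    (hhp : hp = o * fun j => Real.tanh (cp j))
    (hf' : f' = fun j => sigmoid ((Wf.mulVec h' + Uf.mulVec x) j))
    (hi' : i' = fun j => sigmoid ((Wi.mulVec h' + Ui.mulVec x) j))
    (ho' : o' = fun j => sigmoid ((Wo.mulVec h' + Uo.mulVec x) j))
    (hz' : z' = fun j => Real.tanh ((Wz.mulVec h' + Uz.mulVec x) j))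
    (hcp' : cp' = i' * z' + f' * c')
    (hhp' : hp' = o' * fun j => Real.tanh (cp' j))
    (hfb : ‖f‖ ≤ finf) (hfb' : ‖f'‖ ≤ finf) :
    ‖cp - cp'‖ ≤ ((‖Wi‖ + C * ‖Wf‖) / 4 + ‖Wz‖) * ‖h - h'‖ + finf * ‖c - c'‖ ∧
    ‖hp - hp'‖ ≤ ((‖Wi‖ + C * ‖Wf‖) / 4 + ‖Wz‖ + ‖Wo‖ / 4) * ‖h - h'‖ + finf * ‖c - c'‖ ∧
    ((‖Wi‖ + C * ‖Wf‖) / 4 + ‖Wz‖ + ‖Wo‖ / 4 + finf < 1 →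
      max ‖cp - cp'‖ ‖hp - hp'‖ ≤
        ((‖Wi‖ + C * ‖Wf‖) / 4 + ‖Wz‖ + ‖Wo‖ / 4 + finf) * max ‖c - c'‖ ‖h - h'‖) := by
  have hfinf0 : (0:ℝ) ≤ finf := (norm_nonneg f).trans hfb
  set H := ‖h - h'‖ with hH
  set Cd := ‖c - c'‖ with hCd
  have hH0 : 0 ≤ H := norm_nonneg _
  have hCd0 : 0 ≤ Cd := norm_nonneg _
  -- generic gate-difference bound
  have gate : ∀ (W : Matrix (Fin dd) (Fin dd) ℝ) (U : Matrix (Fin dd) (Fin nn) ℝ)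
      (j : Fin dd),
      |(W.mulVec h + U.mulVec x) j - (W.mulVec h' + U.mulVec x) j| ≤ ‖W‖ * H := by
    intro W U j
    have e : (W.mulVec h + U.mulVec x) j - (W.mulVec h' + U.mulVec x) j
        = (W.mulVec (h - h')) j := by
      simp [Matrix.mulVec_sub, Pi.sub_apply]
    rw [e]
    calc |(W.mulVec (h - h')) j| ≤ ‖W.mulVec (h - h')‖ := by
          simpa [Real.norm_eq_abs] using norm_le_pi_norm (W.mulVec (h - h')) j
      _ ≤ ‖W‖ * H := Matrix.linfty_opNorm_mulVec W (h - h')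
  have hi_diff : ∀ j, |i j - i' j| ≤ ‖Wi‖ * H / 4 := by
    intro j; rw [hi, hi']
    calc |sigmoid ((Wi.mulVec h + Ui.mulVec x) j) - sigmoid ((Wi.mulVec h' + Ui.mulVec x) j)|
        ≤ |(Wi.mulVec h + Ui.mulVec x) j - (Wi.mulVec h' + Ui.mulVec x) j| / 4 :=
          sigmoid_lipschitz _ _
      _ ≤ ‖Wi‖ * H / 4 := by linarith [gate Wi Ui j]
  have hf_diff : ∀ j, |f j - f' j| ≤ ‖Wf‖ * H / 4 := by
    intro j; rw [hf, hf']
    calc |sigmoid ((Wf.mulVec h + Uf.mulVec x) j) - sigmoid ((Wf.mulVec h' + Uf.mulVec x) j)|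
        ≤ |(Wf.mulVec h + Uf.mulVec x) j - (Wf.mulVec h' + Uf.mulVec x) j| / 4 :=
          sigmoid_lipschitz _ _
      _ ≤ ‖Wf‖ * H / 4 := by linarith [gate Wf Uf j]
  have ho_diff : ∀ j, |o j - o' j| ≤ ‖Wo‖ * H / 4 := by
    intro j; rw [ho, ho']
    calc |sigmoid ((Wo.mulVec h + Uo.mulVec x) j) - sigmoid ((Wo.mulVec h' + Uo.mulVec x) j)|
        ≤ |(Wo.mulVec h + Uo.mulVec x) j - (Wo.mulVec h' + Uo.mulVec x) j| / 4 :=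
          sigmoid_lipschitz _ _
      _ ≤ ‖Wo‖ * H / 4 := by linarith [gate Wo Uo j]
  have hz_diff : ∀ j, |z j - z' j| ≤ ‖Wz‖ * H := by
    intro j; rw [hz, hz']
    calc |Real.tanh ((Wz.mulVec h + Uz.mulVec x) j) - Real.tanh ((Wz.mulVec h' + Uz.mulVec x) j)|
        ≤ |(Wz.mulVec h + Uz.mulVec x) j - (Wz.mulVec h' + Uz.mulVec x) j| :=
          tanh_lipschitz _ _
      _ ≤ ‖Wz‖ * H := gate Wz Uz j
  have habs_i : ∀ j, |i j| ≤ 1 := by intro j; rw [hi]; exact abs_sigmoid_le_one _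
  have habs_o : ∀ j, |o j| ≤ 1 := by intro j; rw [ho]; exact abs_sigmoid_le_one _
  have habs_z' : ∀ j, |z' j| ≤ 1 := by intro j; rw [hz']; exact abs_tanh_le_one _
  have habs_f : ∀ j, |f j| ≤ finf := by
    intro j
    calc |f j| ≤ ‖f‖ := by simpa [Real.norm_eq_abs] using norm_le_pi_norm f j
      _ ≤ finf := hfb
  have habs_c' : ∀ j, |c' j| ≤ C := by
    intro j
    calc |c' j| ≤ ‖c'‖ := by simpa [Real.norm_eq_abs] using norm_le_pi_norm c' j
      _ ≤ C := hc'C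
  have hcd_j : ∀ j, |c j - c' j| ≤ Cd := by
    intro j
    simpa [Real.norm_eq_abs, Pi.sub_apply] using norm_le_pi_norm (c - c') j
  have hWi0 : (0:ℝ) ≤ ‖Wi‖ := norm_nonneg _
  have hWf0 : (0:ℝ) ≤ ‖Wf‖ := norm_nonneg _
  have hWo0 : (0:ℝ) ≤ ‖Wo‖ := norm_nonneg _
  have hWz0 : (0:ℝ) ≤ ‖Wz‖ := norm_nonneg _
  have hRHS1 : (0:ℝ) ≤ ((‖Wi‖ + C * ‖Wf‖) / 4 + ‖Wz‖) * H + finf * Cd := by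
    apply add_nonneg
    · apply mul_nonneg _ hH0
      apply add_nonneg _ hWz0
      apply div_nonneg _ (by norm_num)
      exact add_nonneg hWi0 (mul_nonneg hC hWf0)
    · exact mul_nonneg hfinf0 hCd0
  -- part 1
  have part1 : ‖cp - cp'‖ ≤ ((‖Wi‖ + C * ‖Wf‖) / 4 + ‖Wz‖) * H + finf * Cd := by
    rw [pi_norm_le_iff_of_nonneg hRHS1]
    intro j
    rw [Real.norm_eq_abs, Pi.sub_apply]
    have e : cp j - cp' j = i j * (z j - z' j) + (i j - i' j) * z' j
        + f j * (c j - c' j) + (f j - f' j) * c' j := by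
      rw [hcp, hcp']; simp [Pi.add_apply, Pi.mul_apply]; ring
    rw [e]
    have b1 : |i j * (z j - z' j)| ≤ 1 * (‖Wz‖ * H) :=
      prod_abs_bound (habs_i j) (hz_diff j)
    have b2 : |(i j - i' j) * z' j| ≤ (‖Wi‖ * H / 4) * 1 :=
      prod_abs_bound (hi_diff j) (habs_z' j)
    have b3 : |f j * (c j - c' j)| ≤ finf * Cd :=
      prod_abs_bound (habs_f j) (hcd_j j)
    have b4 : |(f j - f' j) * c' j| ≤ (‖Wf‖ * H / 4) * C :=
      prod_abs_bound (hf_diff j) (habs_c' j)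
    calc |i j * (z j - z' j) + (i j - i' j) * z' j + f j * (c j - c' j) + (f j - f' j) * c' j|
        ≤ |i j * (z j - z' j)| + |(i j - i' j) * z' j| + |f j * (c j - c' j)|
          + |(f j - f' j) * c' j| := by
          exact (abs_add_le _ _).trans (by
            gcongr
            exact (abs_add_le _ _).trans (by gcongr; exact abs_add_le _ _))
      _ ≤ ((‖Wi‖ + C * ‖Wf‖) / 4 + ‖Wz‖) * H + finf * Cd := by nlinarith
  -- part 2
  have hRHS2 : (0:ℝ) ≤ ((‖Wi‖ + C * ‖Wf‖) / 4 + ‖Wz‖ + ‖Wo‖ / 4) * H + finf * Cd := by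
    nlinarith [mul_nonneg hWo0 hH0]
  have part2 : ‖hp - hp'‖ ≤ ((‖Wi‖ + C * ‖Wf‖) / 4 + ‖Wz‖ + ‖Wo‖ / 4) * H + finf * Cd := by
    rw [pi_norm_le_iff_of_nonneg hRHS2]
    intro j
    rw [Real.norm_eq_abs, Pi.sub_apply]
    have e : hp j - hp' j = o j * (Real.tanh (cp j) - Real.tanh (cp' j))
        + (o j - o' j) * Real.tanh (cp' j) := by
      rw [hhp, hhp']; simp [Pi.mul_apply]; ring
    rw [e]
    have btanh : |Real.tanh (cp j) - Real.tanh (cp' j)|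
        ≤ ((‖Wi‖ + C * ‖Wf‖) / 4 + ‖Wz‖) * H + finf * Cd := by
      calc |Real.tanh (cp j) - Real.tanh (cp' j)| ≤ |cp j - cp' j| := tanh_lipschitz _ _
        _ ≤ ‖cp - cp'‖ := by
            simpa [Real.norm_eq_abs, Pi.sub_apply] using norm_le_pi_norm (cp - cp') j
        _ ≤ _ := part1
    have b1 : |o j * (Real.tanh (cp j) - Real.tanh (cp' j))|
        ≤ 1 * (((‖Wi‖ + C * ‖Wf‖) / 4 + ‖Wz‖) * H + finf * Cd) :=
      prod_abs_bound (habs_o j) btanh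
    have b2 : |(o j - o' j) * Real.tanh (cp' j)| ≤ (‖Wo‖ * H / 4) * 1 :=
      prod_abs_bound (ho_diff j) (abs_tanh_le_one _)
    calc |o j * (Real.tanh (cp j) - Real.tanh (cp' j)) + (o j - o' j) * Real.tanh (cp' j)|
        ≤ |o j * (Real.tanh (cp j) - Real.tanh (cp' j))|
          + |(o j - o' j) * Real.tanh (cp' j)| := abs_add_le _ _
      _ ≤ ((‖Wi‖ + C * ‖Wf‖) / 4 + ‖Wz‖ + ‖Wo‖ / 4) * H + finf * Cd := by nlinarith
  refine ⟨part1, part2, fun _ => ?_⟩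
  set M := max Cd H with hM
  have hHm : H ≤ M := le_max_right _ _
  have hCm : Cd ≤ M := le_max_left _ _
  have hm0 : 0 ≤ M := le_trans hH0 hHm
  have ha0 : (0:ℝ) ≤ (‖Wi‖ + C * ‖Wf‖) / 4 + ‖Wz‖ := by
    apply add_nonneg _ hWz0
    apply div_nonneg _ (by norm_num)
    exact add_nonneg hWi0 (mul_nonneg hC hWf0)
  have h2 : finf * Cd ≤ finf * M := mul_le_mul_of_nonneg_left hCm hfinf0
  have h3 : (0:ℝ) ≤ (‖Wo‖/4) * M := mul_nonneg (by positivity) hm0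
  have expand : ((‖Wi‖ + C * ‖Wf‖) / 4 + ‖Wz‖ + ‖Wo‖ / 4 + finf) * M
      = ((‖Wi‖ + C * ‖Wf‖) / 4 + ‖Wz‖) * M + (‖Wo‖/4) * M + finf * M := by ring
  apply max_le
  · have h1 : ((‖Wi‖ + C * ‖Wf‖) / 4 + ‖Wz‖) * H
        ≤ ((‖Wi‖ + C * ‖Wf‖) / 4 + ‖Wz‖) * M := mul_le_mul_of_nonneg_left hHm ha0
    rw [expand]
    linarith [part1]
  · have h1 : ((‖Wi‖ + C * ‖Wf‖) / 4 + ‖Wz‖ + ‖Wo‖/4) * H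
        ≤ ((‖Wi‖ + C * ‖Wf‖) / 4 + ‖Wz‖ + ‖Wo‖/4) * M := by
      apply mul_le_mul_of_nonneg_left hHm
      positivity
    rw [expand]
    have expand2 : ((‖Wi‖ + C * ‖Wf‖) / 4 + ‖Wz‖ + ‖Wo‖/4) * H
        = ((‖Wi‖ + C * ‖Wf‖) / 4 + ‖Wz‖ + ‖Wo‖/4) * H := rfl
    have expand3 : ((‖Wi‖ + C * ‖Wf‖) / 4 + ‖Wz‖ + ‖Wo‖/4) * M
        = ((‖Wi‖ + C * ‖Wf‖) / 4 + ‖Wz‖) * M + (‖Wo‖/4) * M := by ring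
    linarith [part2, h1, expand3.ge, expand3.le]
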